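/- Let n ≥ 2, μ > 0, ν > 0 and ψ(y) = y + Σ_{k=1}^{∞} (ν μ^{n+k}/(n+k)!) y^{k+1}. Define F₁(y) = ψ(y) and F_{k+1}(y) = F_k'(y) ψ(y) − k F_k(y). Then for every k ≥ 1, F_k is a power series with nonnegative coefficients and F_k(y) = O(y^k) at 0 (the coefficients of y^j vanish for j < k). -/

import Mathlib

open scoped BigOperators Nat

/-- let `ψ(y) = y + ∑_{k≥1} (νμ^{n+k}/(n+k)!) y^{k+1}` (as a formal power
series, `μ, ν > 0`, `n ≥ 2`) and define `F₁ = ψ`, `F_{k+1} = F_k' ψ − k F_k`. Then each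
`F_k` (`k ≥ 1`) has nonnegative coefficients and vanishes to order `k` at `0`. -/
theorem calabi_recursion_nonneg_coeffs
    (n : ℕ) (hn : 2 ≤ n) (μ ν : ℝ) (hμ : 0 < μ) (hν : 0 < ν)
    (ψp : PowerSeries ℝ)
    (hψp : ψp = PowerSeries.mk fun m =>
      if m = 0 then 0 else if m = 1 then 1 else ν * μ ^ (n + m - 1) / ((n + m - 1)! : ℝ))
    (F : ℕ → PowerSeries ℝ)
    (hF1 : F 1 = ψp)
    (hFrec : ∀ k ≥ 1, F (k + 1) = PowerSeries.derivative ℝ (F k) * ψp - (k : ℝ) • F k) :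
    ∀ k ≥ 1, (∀ j, 0 ≤ PowerSeries.coeff j (F k))
      ∧ (∀ j < k, PowerSeries.coeff j (F k) = 0) := by
  have hψ0 : PowerSeries.coeff 0 ψp = 0 := by simp [hψp]
  have hψ1 : PowerSeries.coeff 1 ψp = 1 := by simp [hψp]
  have hψnn : ∀ m, 0 ≤ PowerSeries.coeff m ψp := by
    intro m
    rw [hψp, PowerSeries.coeff_mk]
    split_ifs with h1 h2
    · exact le_refl 0
    · exact zero_le_one
    · positivity
  intro k hk
  induction k, hk using Nat.le_induction with
  | base =>
    refine ⟨fun j => by rw [hF1]; exact hψnn j, fun j hj => ?_⟩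
    interval_cases j
    rw [hF1]; exact hψ0
  | succ k hk ih =>
    obtain ⟨ihnn, ihvan⟩ := ih
    -- coefficient formula
    have hcoeff : ∀ j : ℕ, PowerSeries.coeff j (F (k + 1)) =
        (∑ p ∈ Finset.HasAntidiagonal.antidiagonal j,
          PowerSeries.coeff (p.1 + 1) (F k) * (p.1 + 1) * PowerSeries.coeff p.2 ψp)
        - (k : ℝ) * PowerSeries.coeff j (F k) := by
      intro j
      rw [hFrec k hk, map_sub, PowerSeries.coeff_mul, map_smul, smul_eq_mul]
      congr 1
      exact Finset.sum_congr rfl fun p _ => by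
        rw [PowerSeries.coeff_derivative]
    have htermnn : ∀ j : ℕ, ∀ p ∈ Finset.HasAntidiagonal.antidiagonal j,
        0 ≤ PowerSeries.coeff (p.1 + 1) (F k) * (p.1 + 1) * PowerSeries.coeff p.2 ψp := by
      intro j p _
      have : (0:ℝ) ≤ (p.1 + 1 : ℕ) := by positivity
      exact mul_nonneg (mul_nonneg (ihnn _) (by push_cast; positivity)) (hψnn _)
    constructor
    · intro j
      rw [hcoeff j]
      by_cases hjk : j < k
      · rw [ihvan j hjk, mul_zero, sub_zero]
        exact Finset.sum_nonneg (htermnn j)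
      · push_neg at hjk
        have hj1 : 1 ≤ j := le_trans hk hjk
        have hmem : ((j - 1, 1) : ℕ × ℕ) ∈ Finset.HasAntidiagonal.antidiagonal j := by
          rw [Finset.HasAntidiagonal.mem_antidiagonal]; omega
        have hsingle := Finset.single_le_sum (htermnn j) hmem
        have heq : (j - 1) + 1 = j := by omega
        have hc : ((j - 1 : ℕ) : ℝ) + 1 = (j : ℝ) := by
          rw [← heq]; push_cast; ring
        simp only [heq, hc, hψ1, mul_one] at hsingle
        have : (k : ℝ) * PowerSeries.coeff j (F k)
            ≤ PowerSeries.coeff j (F k) * (j : ℝ) := by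
          rw [mul_comm]
          exact mul_le_mul_of_nonneg_left (by exact_mod_cast hjk) (ihnn j)
        linarith
    · intro j hj
      rw [hcoeff j]
      by_cases hjk : j < k
      · rw [ihvan j hjk, mul_zero, sub_zero]
        refine Finset.sum_eq_zero fun p hp => ?_
        rw [Finset.HasAntidiagonal.mem_antidiagonal] at hp
        rcases Nat.eq_zero_or_pos p.2 with h2 | h2
        · rw [h2, hψ0, mul_zero]
        · have : p.1 + 1 < k := by omega
          rw [ihvan _ this, zero_mul, zero_mul]
      · have hjk' : j = k := by omega
        subst hjk'
        have hsum : (∑ p ∈ Finset.HasAntidiagonal.antidiagonal j,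
            PowerSeries.coeff (p.1 + 1) (F j) * (p.1 + 1) * PowerSeries.coeff p.2 ψp)
            = PowerSeries.coeff j (F j) * (j : ℝ) := by
          rw [Finset.sum_eq_single ((j - 1, 1) : ℕ × ℕ)]
          · have heq : (j - 1) + 1 = j := by omega
            have hc : ((j - 1 : ℕ) : ℝ) + 1 = (j : ℝ) := by
              rw [← heq]; push_cast; ring
            simp only [heq, hc, hψ1, mul_one]
          · intro p hp hne
            rw [Finset.HasAntidiagonal.mem_antidiagonal] at hp
            rcases Nat.eq_zero_or_pos p.2 with h2 | h2
            · rw [h2, hψ0, mul_zero]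
            · rcases Nat.lt_or_ge p.2 2 with h3 | h3
              · exfalso; apply hne
                have : p.2 = 1 := by omega
                have : p.1 = j - 1 := by omega
                ext <;> simp [*]
              · have : p.1 + 1 < j := by omega
                rw [ihvan _ this, zero_mul, zero_mul]
          · intro habs
            exfalso; apply habs
            rw [Finset.HasAntidiagonal.mem_antidiagonal]; omega
        rw [hsum, mul_comm, sub_self]
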